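/- For real m, n > 0, the functions exp(x^m) and exp(x^n) are Lipschitz equivalent if and only if m = n. -/

import Mathlib

open Real Filter Asymptotics

lemma rpow_littleO {a b : ℝ} (hab : a < b) :
    (fun x : ℝ => x ^ a) =o[atTop] (fun x : ℝ => x ^ b) := by
  rw [isLittleO_iff_tendsto']
  · refine (tendsto_rpow_neg_atTop (by linarith : (0:ℝ) < b - a)).congr' ?_
    filter_upwards [eventually_gt_atTop 0] with x hx
    rw [neg_sub, rpow_sub hx, div_eq_mul_inv]
  · filter_upwards [eventually_gt_atTop 0] with x hx h
    exact absurd h (by positivity)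

lemma aux_eventually (C m n : ℝ) (hC : 1 ≤ C) (hn : 0 < n) (hmn : n < m) :
    ∀ᶠ x : ℝ in atTop, Real.log (C * x + 2 * C) + (2 * C) ^ n * x ^ n < x ^ m := by
  have hm : 0 < m := hn.trans hmn
  have h1 : (fun x : ℝ => Real.log (3 * C) + Real.log x + (2 * C) ^ n * x ^ n)
      =o[atTop] (fun x : ℝ => x ^ m) := by
    refine IsLittleO.add (IsLittleO.add ?_ ?_) ?_
    · exact isLittleO_const_left.2 (Or.inr (by
        simpa [Function.comp_def, Real.norm_eq_abs] using tendsto_abs_atTop_atTop.comp (tendsto_rpow_atTop hm)))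
    · exact isLittleO_log_rpow_atTop hm
    · exact ((rpow_littleO hmn).const_mul_left _)
  have h2 := h1.def (by norm_num : (0:ℝ) < 1/2)
  filter_upwards [h2, eventually_ge_atTop (2:ℝ), eventually_ge_atTop (1:ℝ)] with x hx h2x h1x
  have hx0 : 0 < x := by linarith
  have hxm : 0 < x ^ m := rpow_pos_of_pos hx0 m
  have hlog : Real.log (C * x + 2 * C) ≤ Real.log (3 * C) + Real.log x := by
    rw [← Real.log_mul (by linarith) (ne_of_gt hx0)]
    apply Real.log_le_log (by nlinarith)
    nlinarith
  have hb : Real.log (3 * C) + Real.log x + (2 * C) ^ n * x ^ n ≤ (1/2) * x ^ m := by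
    calc Real.log (3 * C) + Real.log x + (2 * C) ^ n * x ^ n
        ≤ ‖Real.log (3 * C) + Real.log x + (2 * C) ^ n * x ^ n‖ := le_norm_self _
      _ ≤ (1/2) * ‖x ^ m‖ := hx
      _ = (1/2) * x ^ m := by rw [Real.norm_eq_abs, abs_of_pos hxm]
  nlinarith

lemma key (m n : ℝ) (hn : 0 < n) (hmn : n < m) (C : ℕ) (hC : 1 ≤ C)
    (h : ∀ x : ℕ, Real.exp ((x : ℝ) ^ m) ≤
      C * Real.exp ((((C * x + C : ℕ) : ℝ)) ^ n) + C * x + C) : False := by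
  have hC1 : (1 : ℝ) ≤ C := by exact_mod_cast hC
  obtain ⟨x₀, hx₀⟩ := (aux_eventually C m n hC1 hn hmn).exists_forall_of_atTop
  -- pick a natural x ≥ max x₀ 1
  obtain ⟨x, hx⟩ := exists_nat_ge (max x₀ 1)
  have hx1 : (1:ℝ) ≤ x := le_trans (le_max_right _ _) hx
  have hxx0 : x₀ ≤ x := le_trans (le_max_left _ _) hx
  have hxpos : (0:ℝ) < x := by linarith
  have key := hx₀ x hxx0
  have hA : (((C * x + C : ℕ) : ℝ)) ^ n ≤ (2 * C) ^ n * (x:ℝ) ^ n := by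
    have hcast : (((C * x + C : ℕ) : ℝ)) = (C:ℝ) * x + C := by push_cast; ring
    rw [hcast, ← Real.mul_rpow (by linarith) (le_of_lt hxpos)]
    apply Real.rpow_le_rpow (by positivity) (by nlinarith) hn.le
  set A := (((C * x + C : ℕ) : ℝ)) ^ n with hAdef
  have hA0 : 0 ≤ A := by
    apply Real.rpow_nonneg; positivity
  have hexpA : 1 ≤ Real.exp A := by simpa using Real.exp_le_exp.2 hA0
  have hchain : Real.exp ((x:ℝ) ^ m) ≤ ((C:ℝ) * x + 2 * C) * Real.exp A := by
    calc Real.exp ((x:ℝ) ^ m) ≤ C * Real.exp A + C * x + C := h x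
      _ ≤ C * Real.exp A + ((C:ℝ) * x + C) * Real.exp A := by
          nlinarith [mul_nonneg (show (0:ℝ) ≤ (C:ℝ) * x + C by positivity)
            (sub_nonneg.2 hexpA)]
      _ = ((C:ℝ) * x + 2 * C) * Real.exp A := by ring
  have hpos : (0:ℝ) < (C:ℝ) * x + 2 * C := by nlinarith
  have : ((C:ℝ) * x + 2 * C) * Real.exp A = Real.exp (Real.log ((C:ℝ) * x + 2 * C) + A) := by
    rw [Real.exp_add, Real.exp_log hpos]
  rw [this] at hchain
  have := Real.exp_le_exp.1 hchain
  nlinarith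


theorem exp_rpow_lipschitzEquiv_iff' (m n : ℝ) (hm : 0 < m) (hn : 0 < n) :
    (∃ C : ℕ, 1 ≤ C ∧ ∀ x : ℕ,
      Real.exp ((x : ℝ) ^ m) ≤ C * Real.exp (((C * x + C : ℕ) : ℝ) ^ n) + C * x + C ∧
      Real.exp ((x : ℝ) ^ n) ≤ C * Real.exp (((C * x + C : ℕ) : ℝ) ^ m) + C * x + C) ↔ m = n := by
  constructor
  · rintro ⟨C, hC, h⟩
    by_contra hne
    rcases lt_or_gt_of_ne hne with hlt | hgt
    · exact key n m hm hlt C hC (fun x => (h x).2)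
    · exact key m n hn hgt C hC (fun x => (h x).1)
  · rintro rfl
    refine ⟨1, le_refl _, fun x => ?_⟩
    have hle : ((x : ℝ)) ^ m ≤ (((1 * x + 1 : ℕ) : ℝ)) ^ m := by
      apply Real.rpow_le_rpow (Nat.cast_nonneg x) _ hm.le
      push_cast; linarith
    have := Real.exp_le_exp.2 hle
    push_cast at this
    constructor <;> push_cast <;> linarith [this, (Nat.cast_nonneg x : (0:ℝ) ≤ (x:ℝ))]


/-- Lipschitz equivalence of nondecreasing functions `ℕ → [0,∞)`: `f ≃ g` iff there
is `C ≥ 1` with `f(x) ≤ C·g(Cx + C) + Cx + C` and symmetrically. -/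
def LipschitzEquivReal (f g : ℕ → ℝ) : Prop :=
  ∃ C : ℕ, 1 ≤ C ∧ ∀ x : ℕ,
    f x ≤ C * g (C * x + C) + C * x + C ∧
    g x ≤ C * f (C * x + C) + C * x + C

/-- For real `m, n > 0`, the functions `exp(xᵐ)` and `exp(xⁿ)` are Lipschitz
equivalent if and only if `m = n`. -/
theorem exp_rpow_lipschitzEquiv_iff (m n : ℝ) (hm : 0 < m) (hn : 0 < n) :
    LipschitzEquivReal (fun x : ℕ => Real.exp ((x : ℝ) ^ m))
      (fun x : ℕ => Real.exp ((x : ℝ) ^ n)) ↔ m = n := by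
  exact exp_rpow_lipschitzEquiv_iff' m n hm hn
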